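/- Let E be a nonzero real locally convex Hausdorff topological vector space. Then (E, σ(E,E′)) has countable pseudocharacter (i.e., there is a countable family of weakly open sets whose intersection is {0}) if and only if there exists an injective continuous linear map from (E, σ(E,E′)) into the product space ℝ^ℕ (equivalently, E admits a weaker separable metrizable locally convex topology). Moreover, if (E, σ(E,E′)) has countable pseudocharacter, then the cardinality of E equals the continuum 2^{ℵ₀}. -/

import Mathlib

open TopologicalSpace Filter Set

/-- A family `N` of subsets of a topological space `X` is a *k-network* if whenever `K ⊆ U`
with `K` compact and `U` open, there is a finite subfamily `F ⊆ N` with `K ⊆ ⋃₀ F ⊆ U`. -/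
def IsKNetwork {X : Type*} [TopologicalSpace X] (N : Set (Set X)) : Prop :=
  ∀ K U : Set X, IsCompact K → IsOpen U → K ⊆ U →
    ∃ F : Set (Set X), F ⊆ N ∧ F.Finite ∧ K ⊆ ⋃₀ F ∧ ⋃₀ F ⊆ U

/-- A family `N` of subsets of `X` is a *network* if for every `x` and every open `U ∋ x`
there is `A ∈ N` with `x ∈ A ⊆ U`. -/
def IsNetwork {X : Type*} [TopologicalSpace X] (N : Set (Set X)) : Prop :=
  ∀ (x : X) (U : Set X), IsOpen U → x ∈ U → ∃ A ∈ N, x ∈ A ∧ A ⊆ U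

/-- A family of subsets is *locally finite* if every point has a neighbourhood meeting
only finitely many of its members. -/
def IsLocallyFiniteFamily {X : Type*} [TopologicalSpace X] (N : Set (Set X)) : Prop :=
  ∀ x : X, ∃ V ∈ nhds x, {A ∈ N | (A ∩ V).Nonempty}.Finite

/-- A family of subsets is *σ-locally finite* if it is a countable union of locally finite
families. -/
def IsSigmaLocallyFinite {X : Type*} [TopologicalSpace X] (N : Set (Set X)) : Prop :=
  ∃ f : ℕ → Set (Set X), (∀ n, IsLocallyFiniteFamily (f n)) ∧ N = ⋃ n, f n

/-- An *ℵ-space* is a regular Hausdorff space with a σ-locally finite k-network. -/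
def IsAlephSpace (X : Type*) [TopologicalSpace X] : Prop :=
  RegularSpace X ∧ T2Space X ∧ ∃ N : Set (Set X), IsSigmaLocallyFinite N ∧ IsKNetwork N

/-- An *ℵ₀-space* is a regular Hausdorff space with a countable k-network. -/
def IsAleph0Space (X : Type*) [TopologicalSpace X] : Prop :=
  RegularSpace X ∧ T2Space X ∧ ∃ N : Set (Set X), N.Countable ∧ IsKNetwork N

set_option linter.unusedSectionVars false

section Aux
variable (E : Type) [AddCommGroup E] [Module ℝ E] [TopologicalSpace E]
    [IsTopologicalAddGroup E] [ContinuousSMul ℝ E]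

lemma weak_extract_aux (U : Set (WeakSpace ℝ E)) (hU : IsOpen U)
    (h0 : (0 : WeakSpace ℝ E) ∈ U) :
    ∃ S : Set (E →L[ℝ] ℝ), S.Finite ∧
      ∀ x : WeakSpace ℝ E, (∀ g ∈ S, g x = 0) → x ∈ U := by
  have hU' : U ∈ nhds (0 : WeakSpace ℝ E) := hU.mem_nhds h0
  change U ∈ @nhds (WeakBilin (topDualPairing ℝ E).flip) _ 0 at hU'
  rw [nhds_induced] at hU'
  obtain ⟨V, hV, hVU⟩ := Filter.mem_comap.mp hU'
  rw [nhds_pi] at hV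
  obtain ⟨I, hIfin, t, ht, hIt⟩ := Filter.mem_pi.mp hV
  refine ⟨I, hIfin, fun x hx => ?_⟩
  apply hVU
  apply hIt
  intro g hg
  have h0g : (0:ℝ) ∈ t g := by
    have := ht g
    simpa using (show ((topDualPairing ℝ E).flip (0 : E)) g ∈ t g from mem_of_mem_nhds this)
  show (topDualPairing ℝ E).flip x g ∈ t g
  rw [show (topDualPairing ℝ E).flip x g = g x from rfl, hx g hg]
  exact h0g

/-- A continuous linear functional on `E` is also continuous for the weak topology. -/
noncomputable def toWeakCLM (g : E →L[ℝ] ℝ) : WeakSpace ℝ E →L[ℝ] ℝ where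
  toFun := fun x => g x
  map_add' := fun x y => g.map_add x y
  map_smul' := fun c x => g.map_smul c x
  cont := WeakBilin.eval_continuous ((topDualPairing ℝ E).flip) g

end Aux

/-- For a nonzero Hausdorff locally convex space `E`, the weak topology `σ(E,E')` has
countable pseudocharacter iff there is an injective continuous linear map from
`(E, σ(E,E'))` into `ℝ^ℕ`; moreover countable pseudocharacter implies `|E| = 𝔠`. -/
theorem weak_countablePseudocharacter_iff_inj_into_RN
    (E : Type) [AddCommGroup E] [Module ℝ E] [TopologicalSpace E]
    [IsTopologicalAddGroup E] [ContinuousSMul ℝ E] [LocallyConvexSpace ℝ E] [T2Space E]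
    (hE : ∃ x : E, x ≠ 0) :
    ((∃ 𝒰 : Set (Set (WeakSpace ℝ E)), 𝒰.Countable ∧ (∀ U ∈ 𝒰, IsOpen U) ∧
        ⋂₀ 𝒰 = {(0 : WeakSpace ℝ E)}) ↔
      ∃ f : WeakSpace ℝ E →L[ℝ] (ℕ → ℝ), Function.Injective f) ∧
    ((∃ 𝒰 : Set (Set (WeakSpace ℝ E)), 𝒰.Countable ∧ (∀ U ∈ 𝒰, IsOpen U) ∧
        ⋂₀ 𝒰 = {(0 : WeakSpace ℝ E)}) →
      Cardinal.mk E = Cardinal.continuum) := by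
  classical
  have main : (∃ 𝒰 : Set (Set (WeakSpace ℝ E)), 𝒰.Countable ∧ (∀ U ∈ 𝒰, IsOpen U) ∧
        ⋂₀ 𝒰 = {(0 : WeakSpace ℝ E)}) ↔
      ∃ f : WeakSpace ℝ E →L[ℝ] (ℕ → ℝ), Function.Injective f := by
    constructor
    · rintro ⟨𝒰, hcount, hopen, hinter⟩
      have h0mem : ∀ U ∈ 𝒰, (0 : WeakSpace ℝ E) ∈ U := by
        intro U hU
        have : (0 : WeakSpace ℝ E) ∈ ⋂₀ 𝒰 := by rw [hinter]; exact rfl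
        exact this U hU
      -- choose finite sets of functionals for each member of 𝒰
      choose S hSfin hS using fun (U : 𝒰) =>
        weak_extract_aux E U.1 (hopen U.1 U.2) (h0mem U.1 U.2)
      -- the union of all chosen functionals, with 0 added
      set T : Set (E →L[ℝ] ℝ) := insert 0 (⋃ U : 𝒰, S U) with hT
      have hTc : T.Countable := by
        have : Countable 𝒰 := hcount.to_subtype
        exact (Set.countable_iUnion fun U => (hSfin U).countable).insert 0
      have hTne : T.Nonempty := ⟨0, mem_insert _ _⟩
      obtain ⟨seq, hseq⟩ := hTc.exists_eq_range hTne
      have key : ∀ x : WeakSpace ℝ E, (∀ n, seq n x = 0) → x = 0 := by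
        intro x hx
        have hall : ∀ g ∈ T, g x = 0 := by
          intro g hg
          rw [hseq] at hg
          obtain ⟨n, rfl⟩ := hg
          exact hx n
        have hxU : x ∈ ⋂₀ 𝒰 := by
          intro U hU
          refine hS ⟨U, hU⟩ x fun g hg => hall g ?_
          exact mem_insert_of_mem _ (mem_iUnion.mpr ⟨⟨U, hU⟩, hg⟩)
        rw [hinter] at hxU
        exact hxU
      refine ⟨ContinuousLinearMap.pi fun n => toWeakCLM E (seq n), ?_⟩
      intro x y hxy
      have hsub : ∀ n, seq n (x - y) = 0 := by
        intro n
        have h1 : toWeakCLM E (seq n) x = toWeakCLM E (seq n) y := congrFun hxy n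
        show toWeakCLM E (seq n) (x - y) = 0
        rw [map_sub, h1, sub_self]
      have := key (x - y) hsub
      exact sub_eq_zero.mp this
    · rintro ⟨f, hf⟩
      refine ⟨range (fun p : ℕ × ℕ => f ⁻¹' {y | |y p.1| < 1/(p.2+1)}),
        countable_range _, ?_, ?_⟩
      · rintro U ⟨p, rfl⟩
        exact (isOpen_lt (continuous_abs.comp (continuous_apply p.1))
          continuous_const).preimage f.continuous
      · ext x
        simp only [mem_sInter, mem_range, mem_singleton_iff]
        constructor
        · intro hx
          have hx' : ∀ n m : ℕ, |f x n| < 1/(m+1 : ℝ) := by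
            intro n m
            exact hx _ ⟨(n, m), rfl⟩ 
          have hz : ∀ n, f x n = 0 := by
            intro n
            by_contra hne
            obtain ⟨m, hm⟩ := exists_nat_one_div_lt (abs_pos.mpr hne)
            exact absurd (hx' n m) (not_lt.mpr hm.le)
          have : f x = 0 := funext hz
          apply hf
          rw [this, map_zero]
        · rintro rfl U ⟨p, rfl⟩
          simp only [mem_preimage, map_zero, mem_setOf_eq, Pi.zero_apply, abs_zero]
          positivity
  refine ⟨main, fun h => ?_⟩
  obtain ⟨f, hf⟩ := main.mp h
  obtain ⟨x, hx⟩ := hE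
  apply le_antisymm
  · have h1 : Cardinal.mk E ≤ Cardinal.mk (ℕ → ℝ) :=
      Cardinal.mk_le_of_injective (f := fun z : E => f z) hf
    calc Cardinal.mk E ≤ Cardinal.mk (ℕ → ℝ) := h1
      _ = Cardinal.mk ℝ ^ Cardinal.mk ℕ := (Cardinal.power_def ℝ ℕ).symm
      _ = Cardinal.continuum ^ Cardinal.aleph0 := by rw [Cardinal.mk_real, Cardinal.mk_nat]
      _ = Cardinal.continuum := Cardinal.continuum_power_aleph0
  · have : Function.Injective fun c : ℝ => c • x := smul_left_injective ℝ hx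
    calc Cardinal.continuum = Cardinal.mk ℝ := Cardinal.mk_real.symm
      _ ≤ Cardinal.mk E := Cardinal.mk_le_of_injective this
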